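/- arXiv:1004.2576 — 2 statements merged into one kernel-verified Lean document; each statement's English description precedes it below -/
import Mathlib

section
/- Let A be a self-adjoint trace-class operator on a separable Hilbert space H, P an orthogonal projection, and ψ : ℝ → ℂ a function whose Fourier transform ψ̂ satisfies ∫ |t| |ψ̂(t)| dt < ∞ (with ψ recovered as ψ(B) = (2π)^{−1/2} ∫ e^{iBt} ψ̂(t) dt). Then ‖P ψ(A) P − P ψ(PAP) P‖_{S₁} ≤ (2π)^{−1/2} ‖PA(I−P)‖_{S₁} ∫ |t| |ψ̂(t)| dt. -/
set_option maxHeartbeats 1000000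
set_option synthInstance.maxHeartbeats 400000


open scoped ENNReal
open MeasureTheory

/-- The trace norm of a bounded operator on a Hilbert space, defined as the supremum
over pairs of finite orthonormal families of `∑ j |⟪T e_j, f_j⟫|`. -/
noncomputable def traceNorm {H : Type*} [NormedAddCommGroup H] [InnerProductSpace ℂ H]
    (T : H →L[ℂ] H) : ℝ≥0∞ :=
  ⨆ (n : ℕ) (e : Fin n → H) (f : Fin n → H)
    (_ : Orthonormal ℂ e) (_ : Orthonormal ℂ f),
      ∑ j, (‖(inner ℂ (T (e j)) (f j) : ℂ)‖₊ : ℝ≥0∞)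

/-- `evol t B = e^{iBt}`. -/
noncomputable def evol {H : Type*} [NormedAddCommGroup H] [InnerProductSpace ℂ H]
    [CompleteSpace H] (t : ℝ) (B : H →L[ℂ] H) : H →L[ℂ] H :=
  NormedSpace.exp ((Complex.I * (t : ℂ)) • B)

/-- `ψ(B) = (2π)^{-1/2} ∫ e^{iBt} ψ̂(t) dt`. -/
noncomputable def opFun {H : Type*} [NormedAddCommGroup H] [InnerProductSpace ℂ H]
    [CompleteSpace H] (B : H →L[ℂ] H) (ψhat : ℝ → ℂ) : H →L[ℂ] H :=
  (Real.sqrt (2*Real.pi))⁻¹ • ∫ t : ℝ, ψhat t • evol t B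

open scoped InnerProductSpace

section aux
set_option linter.unusedSectionVars false
variable {H : Type*} [NormedAddCommGroup H] [InnerProductSpace ℂ H] [CompleteSpace H]

lemma evol_eq (t : ℝ) (B : H →L[ℂ] H) :
    evol t B = NormedSpace.exp (t • (Complex.I • B)) := by
  rw [evol]
  congr 1
  rw [← Complex.coe_smul, smul_smul, mul_comm]

lemma star_evol (t : ℝ) {B : H →L[ℂ] H} (hB : IsSelfAdjoint B) :
    star (evol t B) = evol (-t) B := by
  rw [evol, evol, NormedSpace.star_exp]
  congr 1
  rw [star_smul, hB.star_eq, star_mul', Complex.star_def, Complex.conj_I,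
    Complex.conj_ofReal, Complex.ofReal_neg]
  ring_nf

lemma evol_add (s t : ℝ) (B : H →L[ℂ] H) :
    evol s B * evol t B = evol (s + t) B := by
  letI : NormedAlgebra ℚ (H →L[ℂ] H) := .restrictScalars ℚ ℂ _
  rw [evol, evol, evol, ← NormedSpace.exp_add_of_commute
    (((Commute.refl B).smul_left _).smul_right _)]
  congr 1
  rw [← add_smul, Complex.ofReal_add]
  ring_nf

lemma evol_zero (B : H →L[ℂ] H) : evol 0 B = 1 := by
  rw [evol]
  simp [NormedSpace.exp_zero]

lemma star_evol_mul_self (t : ℝ) {B : H →L[ℂ] H} (hB : IsSelfAdjoint B) :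
    star (evol t B) * evol t B = 1 := by
  rw [star_evol t hB, evol_add, neg_add_cancel, evol_zero]

lemma isometric_inner {M : H →L[ℂ] H} (hM : star M * M = 1) (x y : H) :
    ⟪M x, M y⟫_ℂ = ⟪x, y⟫_ℂ := by
  calc ⟪M x, M y⟫_ℂ = ⟪x, (ContinuousLinearMap.adjoint M) (M y)⟫_ℂ := by
        rw [ContinuousLinearMap.adjoint_inner_right]
    _ = ⟪x, y⟫_ℂ := by
        rw [← ContinuousLinearMap.star_eq_adjoint, ← ContinuousLinearMap.mul_apply, hM,
          ContinuousLinearMap.one_apply]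

lemma inner_sa_move {M : H →L[ℂ] H} (hM : IsSelfAdjoint M) (x z : H) :
    ⟪x, M z⟫_ℂ = ⟪M x, z⟫_ℂ := by
  rw [← ContinuousLinearMap.adjoint_inner_left]
  rw [show ContinuousLinearMap.adjoint M = M from by
    rw [← ContinuousLinearMap.star_eq_adjoint, hM.star_eq]]

lemma isometric_norm {M : H →L[ℂ] H} (hM : star M * M = 1) (x : H) : ‖M x‖ = ‖x‖ := by
  have h := isometric_inner hM x x
  have h1 : ‖M x‖ ^ 2 = ‖x‖ ^ 2 := by
    rw [← inner_self_eq_norm_sq (𝕜 := ℂ), ← inner_self_eq_norm_sq (𝕜 := ℂ), h]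
  nlinarith [norm_nonneg (M x), norm_nonneg x]

lemma isometric_orthonormal {M : H →L[ℂ] H} (hM : star M * M = 1) {n : ℕ} {e : Fin n → H}
    (he : Orthonormal ℂ e) : Orthonormal ℂ (fun j => M (e j)) := by
  rw [orthonormal_iff_ite] at he ⊢
  intro i j
  rw [isometric_inner hM]
  exact he i j

lemma evol_norm_le (t : ℝ) {B : H →L[ℂ] H} (hB : IsSelfAdjoint B) : ‖evol t B‖ ≤ 1 := by
  refine ContinuousLinearMap.opNorm_le_bound _ zero_le_one (fun x => ?_)
  rw [isometric_norm (star_evol_mul_self t hB), one_mul]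

lemma continuous_exp_real_smul (C : H →L[ℂ] H) :
    Continuous (fun r : ℝ => NormedSpace.exp (r • C)) := by
  rw [continuous_iff_continuousAt]
  intro r
  exact (hasDerivAt_exp_smul_const C r).continuousAt

lemma continuous_evol (B : H →L[ℂ] H) : Continuous (fun t : ℝ => evol t B) := by
  have h : (fun t : ℝ => evol t B) = fun t : ℝ => NormedSpace.exp (t • (Complex.I • B)) := by
    funext t; exact evol_eq t B
  rw [h]
  exact continuous_exp_real_smul _

lemma duhamel (A X : H →L[ℂ] H) (t : ℝ) :
    evol t A - evol t X = ∫ s in (0:ℝ)..t,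
      NormedSpace.exp ((t - s) • (Complex.I • A)) *
        ((Complex.I • (A - X)) * NormedSpace.exp (s • (Complex.I • X))) := by
  set CA := Complex.I • A with hCA
  set CX := Complex.I • X with hCX
  have cont1 := continuous_exp_real_smul CA
  have cont2 := continuous_exp_real_smul CX
  have contΞ : Continuous (fun s : ℝ =>
      NormedSpace.exp ((t - s) • CA) * ((CX - CA) * NormedSpace.exp (s • CX))) :=
    (cont1.comp (continuous_const.sub continuous_id)).mul (continuous_const.mul cont2)
  have hderiv : ∀ s : ℝ, HasDerivAt
      (fun s : ℝ => NormedSpace.exp ((t - s) • CA) * NormedSpace.exp (s • CX))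
      (NormedSpace.exp ((t - s) • CA) * ((CX - CA) * NormedSpace.exp (s • CX))) s := by
    intro s
    have h1 : HasDerivAt (fun r : ℝ => NormedSpace.exp (r • CA))
        (NormedSpace.exp ((t - s) • CA) * CA) (t - s) := hasDerivAt_exp_smul_const CA (t - s)
    have hin : HasDerivAt (fun s : ℝ => t - s) (-1) s := (hasDerivAt_id s).const_sub t
    have hL : HasDerivAt (fun s : ℝ => NormedSpace.exp ((t - s) • CA))
        ((-1 : ℝ) • (NormedSpace.exp ((t - s) • CA) * CA)) s := h1.scomp s hin
    have h2 : HasDerivAt (fun s : ℝ => NormedSpace.exp (s • CX))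
        (CX * NormedSpace.exp (s • CX)) s := hasDerivAt_exp_smul_const' CX s
    have h3 := hL.mul h2
    refine h3.congr_deriv ?_
    simp only [neg_smul, one_smul]
    noncomm_ring
  have hint : IntervalIntegrable (fun s : ℝ =>
      NormedSpace.exp ((t - s) • CA) * ((CX - CA) * NormedSpace.exp (s • CX)))
      volume 0 t := contΞ.intervalIntegrable 0 t
  have hftc := intervalIntegral.integral_eq_sub_of_hasDerivAt
    (f := fun s : ℝ => NormedSpace.exp ((t - s) • CA) * NormedSpace.exp (s • CX))
    (fun s _ => hderiv s) hint
  have hGt : NormedSpace.exp ((t - t) • CA) * NormedSpace.exp (t • CX) = evol t X := by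
    rw [sub_self, zero_smul, NormedSpace.exp_zero, one_mul, evol_eq]
  have hG0 : NormedSpace.exp ((t - 0) • CA) * NormedSpace.exp ((0:ℝ) • CX) = evol t A := by
    rw [sub_zero, zero_smul, NormedSpace.exp_zero, mul_one, evol_eq]
  rw [show (fun s => NormedSpace.exp ((t - s) • CA) * NormedSpace.exp (s • CX)) t
      - (fun s => NormedSpace.exp ((t - s) • CA) * NormedSpace.exp (s • CX)) 0
      = evol t X - evol t A from by simp only []; rw [hGt, hG0]] at hftc
  have h4 : evol t A - evol t X
      = -∫ s in (0:ℝ)..t,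
          NormedSpace.exp ((t - s) • CA) * ((CX - CA) * NormedSpace.exp (s • CX)) := by
    rw [hftc]; abel
  rw [h4, ← intervalIntegral.integral_neg]
  congr 1
  funext s
  have h5 : Complex.I • (A - X) = CA - CX := by rw [hCA, hCX, smul_sub]
  rw [h5]
  noncomm_ring

lemma alg_key (A P : H →L[ℂ] H) (hPidem : IsIdempotentElem P) (s : ℝ) :
    (Complex.I • (A - P*A*P)) * NormedSpace.exp (s • (Complex.I • (P*A*P))) * P
      = (Complex.I • ((1 - P)*A*P)) * NormedSpace.exp (s • (Complex.I • (P*A*P))) := by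
  have h1 : Commute P (P*A*P) := by
    show P * (P*A*P) = (P*A*P) * P
    simp only [← mul_assoc, hPidem.eq]
    simp only [mul_assoc, hPidem.eq]
  have hPX : Commute P (s • (Complex.I • (P*A*P))) := (h1.smul_right _).smul_right _
  have hcomm : NormedSpace.exp (s • (Complex.I • (P*A*P))) * P
      = P * NormedSpace.exp (s • (Complex.I • (P*A*P))) := (hPX.exp_right.eq).symm
  have hsub : (A - P*A*P) * P = (1 - P)*A*P := by
    simp only [sub_mul, one_mul, mul_assoc, hPidem.eq]
  rw [mul_assoc, hcomm, ← mul_assoc, smul_mul_assoc, hsub, ← smul_mul_assoc]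

lemma le_traceNorm {n : ℕ} {e f : Fin n → H} (he : Orthonormal ℂ e) (hf : Orthonormal ℂ f)
    (T : H →L[ℂ] H) :
    ∑ j, (‖(inner ℂ (T (e j)) (f j) : ℂ)‖₊ : ℝ≥0∞) ≤ traceNorm T :=
  le_iSup_of_le n <| le_iSup_of_le e <| le_iSup_of_le f <|
    le_iSup_of_le he <| le_iSup_of_le hf le_rfl

lemma traceNorm_finite_bound {T : H →L[ℂ] H} (hT : traceNorm T ≠ ⊤) {n : ℕ}
    {u v : Fin n → H} (hu : Orthonormal ℂ u) (hv : Orthonormal ℂ v) :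
    ∑ j, ‖⟪T (u j), v j⟫_ℂ‖ ≤ (traceNorm T).toReal := by
  have h := le_traceNorm hu hv T
  have h2 : ∑ j, ‖⟪T (u j), v j⟫_ℂ‖
      = (∑ j, (‖⟪T (u j), v j⟫_ℂ‖₊ : ℝ≥0∞)).toReal := by
    rw [← ENNReal.coe_finset_sum, ENNReal.coe_toReal, NNReal.coe_sum]
    simp [coe_nnnorm]
  rw [h2]
  exact ENNReal.toReal_mono hT h

lemma Q_unitary {P : H →L[ℂ] H} (hPidem : IsIdempotentElem P) (hPsa : IsSelfAdjoint P) :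
    star (P + P - 1) * (P + P - 1) = 1 := by
  rw [show star (P + P - 1) = P + P - 1 by simp [star_sub, star_add, hPsa.star_eq]]
  simp only [mul_sub, sub_mul, add_mul, mul_add, mul_one, one_mul, hPidem.eq]
  abel

lemma P_split (P : H →L[ℂ] H) (x : H) : P x = (1/2 : ℝ) • ((P + P - 1) x + x) := by
  simp only [ContinuousLinearMap.add_apply, ContinuousLinearMap.sub_apply,
    ContinuousLinearMap.one_apply]
  module

lemma proj_norm_le {P : H →L[ℂ] H} (hPidem : IsIdempotentElem P) (hPsa : IsSelfAdjoint P)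
    (x : H) : ‖P x‖ ≤ ‖x‖ := by
  have hadj : ContinuousLinearMap.adjoint P = P := by
    rw [← ContinuousLinearMap.star_eq_adjoint, hPsa.star_eq]
  have h1 : ⟪P x, P x⟫_ℂ = ⟪x, P x⟫_ℂ := by
    calc ⟪P x, P x⟫_ℂ = ⟪x, (ContinuousLinearMap.adjoint P) (P x)⟫_ℂ := by
          rw [ContinuousLinearMap.adjoint_inner_right]
      _ = ⟪x, P x⟫_ℂ := by
          rw [hadj, ← ContinuousLinearMap.mul_apply, hPidem.eq]
  have h2 : ‖P x‖ ^ 2 = RCLike.re ⟪x, P x⟫_ℂ := by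
    rw [← inner_self_eq_norm_sq (𝕜 := ℂ), h1]
  have h3 : RCLike.re ⟪x, P x⟫_ℂ ≤ ‖⟪x, P x⟫_ℂ‖ := RCLike.re_le_norm _
  have h4 : ‖⟪x, P x⟫_ℂ‖ ≤ ‖x‖ * ‖P x‖ := norm_inner_le_norm x (P x)
  nlinarith [norm_nonneg (P x), norm_nonneg x]

lemma star_B' {A P : H →L[ℂ] H} (hAsa : IsSelfAdjoint A) (hPsa : IsSelfAdjoint P) :
    star ((1 - P) * A * P) = P * A * (1 - P) := by
  simp [star_mul, hAsa.star_eq, hPsa.star_eq, star_sub, mul_assoc]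

lemma sa_PAP {A P : H →L[ℂ] H} (hAsa : IsSelfAdjoint A) (hPsa : IsSelfAdjoint P) :
    IsSelfAdjoint (P * A * P) := by
  rw [IsSelfAdjoint]
  simp [star_mul, hAsa.star_eq, hPsa.star_eq, mul_assoc]

lemma key_sum (A P : H →L[ℂ] H) (hAsa : IsSelfAdjoint A) (hPidem : IsIdempotentElem P)
    (hPsa : IsSelfAdjoint P) (hS : traceNorm (P * A * (1 - P)) ≠ ⊤) {n : ℕ}
    {e f : Fin n → H} (he : Orthonormal ℂ e) (hf : Orthonormal ℂ f) (s τ : ℝ) :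
    ∑ j, ‖⟪(P * A * (1 - P)) (evol τ A (P (f j))), evol s (P*A*P) (e j)⟫_ℂ‖
      ≤ (traceNorm (P * A * (1 - P))).toReal := by
  have hQ := Q_unitary hPidem hPsa
  have hXsa := sa_PAP hAsa hPsa
  have hU := star_evol_mul_self τ hAsa
  have hW := star_evol_mul_self s hXsa
  set T := P * A * (1 - P) with hTdef
  set a : Fin n → H := fun j => evol τ A ((P + P - 1) (f j)) with ha
  set b : Fin n → H := fun j => evol τ A (f j) with hb
  set w : Fin n → H := fun j => evol s (P*A*P) (e j) with hw
  have hoa : Orthonormal ℂ a := isometric_orthonormal hU (isometric_orthonormal hQ hf)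
  have hob : Orthonormal ℂ b := isometric_orthonormal hU hf
  have how : Orthonormal ℂ w := isometric_orthonormal hW he
  have hptw : ∀ j, ‖⟪T (evol τ A (P (f j))), w j⟫_ℂ‖
      ≤ 1/2 * ‖⟪T (a j), w j⟫_ℂ‖ + 1/2 * ‖⟪T (b j), w j⟫_ℂ‖ := by
    intro j
    have hsplit : evol τ A (P (f j)) = (1/2 : ℝ) • (a j + b j) := by
      rw [P_split P (f j), ha, hb]
      simp only [ContinuousLinearMap.map_smul_of_tower, map_add]
    rw [hsplit, ← Complex.coe_smul, _root_.map_smul, inner_smul_left, map_add, inner_add_left,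
      norm_mul, RCLike.norm_conj]
    have h12 : ‖((1/2 : ℝ) : ℂ)‖ = 1/2 := by
      rw [Complex.norm_real]; norm_num
    rw [h12]
    have := norm_add_le (⟪T (a j), w j⟫_ℂ) (⟪T (b j), w j⟫_ℂ)
    nlinarith [norm_nonneg (⟪T (a j), w j⟫_ℂ), norm_nonneg (⟪T (b j), w j⟫_ℂ)]
  calc ∑ j, ‖⟪T (evol τ A (P (f j))), w j⟫_ℂ‖
      ≤ ∑ j, (1/2 * ‖⟪T (a j), w j⟫_ℂ‖ + 1/2 * ‖⟪T (b j), w j⟫_ℂ‖) :=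
        Finset.sum_le_sum (fun j _ => hptw j)
    _ = 1/2 * (∑ j, ‖⟪T (a j), w j⟫_ℂ‖) + 1/2 * (∑ j, ‖⟪T (b j), w j⟫_ℂ‖) := by
        rw [Finset.sum_add_distrib, Finset.mul_sum, Finset.mul_sum]
    _ ≤ 1/2 * (traceNorm T).toReal + 1/2 * (traceNorm T).toReal := by
        have h1 := traceNorm_finite_bound hS hoa how
        have h2 := traceNorm_finite_bound hS hob how
        have h3 : (0:ℝ) ≤ 1/2 := by norm_num
        nlinarith
    _ = (traceNorm T).toReal := by ring

lemma traceNorm_le_of_forall {T : H →L[ℂ] H} {b : ℝ≥0∞}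
    (h : ∀ (n : ℕ) (e f : Fin n → H), Orthonormal ℂ e → Orthonormal ℂ f →
      ∑ j, (‖(inner ℂ (T (e j)) (f j) : ℂ)‖₊ : ℝ≥0∞) ≤ b) : traceNorm T ≤ b := by
  unfold traceNorm
  exact iSup_le fun n => iSup_le fun e => iSup_le fun f =>
    iSup_le fun he => iSup_le fun hf => h n e f he hf

lemma traceNorm_zero : traceNorm (0 : H →L[ℂ] H) = 0 := by
  refine le_antisymm (traceNorm_le_of_forall fun n e f he hf => ?_) zero_le
  simp

end aux

/-- trace-norm bound for `Pψ(A)P − Pψ(PAP)P`. -/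
theorem stmt_4 {H : Type*} [NormedAddCommGroup H] [InnerProductSpace ℂ H]
    [CompleteSpace H] [TopologicalSpace.SeparableSpace H]
    (A P : H →L[ℂ] H) (hAsa : IsSelfAdjoint A) (hAtr : traceNorm A ≠ ⊤)
    (hPidem : IsIdempotentElem P) (hPsa : IsSelfAdjoint P)
    (ψhat : ℝ → ℂ) (hψ1 : Integrable ψhat)
    (hψ2 : Integrable (fun t => |t| * ‖ψhat t‖)) :
    traceNorm (P * (opFun A ψhat - opFun (P*A*P) ψhat) * P)
      ≤ ENNReal.ofReal ((Real.sqrt (2*Real.pi))⁻¹ * ∫ t : ℝ, |t| * ‖ψhat t‖) *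
          traceNorm (P * A * (1 - P)) := by
  classical
  set c : ℝ := (Real.sqrt (2*Real.pi))⁻¹ with hc
  set I0 : ℝ := ∫ t : ℝ, |t| * ‖ψhat t‖ with hI0
  have hc0 : 0 ≤ c := by rw [hc]; positivity
  have hI0nn : 0 ≤ I0 := by
    rw [hI0]; exact integral_nonneg (fun t => by positivity)
  by_cases hS : traceNorm (P * A * (1 - P)) = ⊤
  · by_cases hI : I0 = 0
    · -- ψhat vanishes a.e., so the LHS operator is zero
      have hae : ∀ᵐ t : ℝ, |t| * ‖ψhat t‖ = 0 := by
        have h0 := (integral_eq_zero_iff_of_nonneg (fun t => by positivity) hψ2).mp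
          (by rw [← hI0]; exact hI)
        filter_upwards [h0] with t ht using ht
      have hae2 : ∀ᵐ t : ℝ, ψhat t = 0 := by
        have hne : ∀ᵐ t : ℝ, t ≠ (0:ℝ) := by
          rw [ae_iff]
          have h1 : {x : ℝ | ¬ x ≠ 0} = {0} := by ext x; simp
          rw [h1]
          exact measure_singleton 0
        filter_upwards [hae, hne] with t h1 h2
        rcases mul_eq_zero.mp h1 with h | h
        · exact absurd h (ne_of_gt (abs_pos.mpr h2))
        · exact norm_eq_zero.mp h
      have hzero : ∀ B : H →L[ℂ] H, opFun B ψhat = 0 := by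
        intro B
        rw [opFun]
        have hz : ∫ t : ℝ, ψhat t • evol t B = 0 := by
          apply integral_eq_zero_of_ae
          filter_upwards [hae2] with t h
          rw [h, zero_smul]; rfl
        rw [hz, smul_zero]
      rw [hzero A, hzero (P*A*P), sub_self, mul_zero, zero_mul, traceNorm_zero]
      exact zero_le
    · have hIpos : 0 < I0 := lt_of_le_of_ne hI0nn (Ne.symm hI)
      have hcpos : 0 < c := by rw [hc]; positivity
      rw [hS, ENNReal.mul_top]
      · exact le_top
      · simp only [ne_eq, ENNReal.ofReal_eq_zero, not_le]
        exact mul_pos hcpos hIpos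
  · -- main case : traceNorm (P*A*(1-P)) finite
    set Sr : ℝ := (traceNorm (P * A * (1 - P))).toReal with hSrdef
    have hSrnn : (0:ℝ) ≤ Sr := ENNReal.toReal_nonneg
    have hXsa : IsSelfAdjoint (P*A*P) := sa_PAP hAsa hPsa
    have hcontA := continuous_evol (H := H) A
    have hcontX := continuous_evol (P*A*P)
    have hFint : ∀ (B : H →L[ℂ] H), IsSelfAdjoint B →
        Integrable (fun t : ℝ => ψhat t • evol t B) := by
      intro B hB
      refine Integrable.mono' hψ1.norm
        (hψ1.aestronglyMeasurable.smul (continuous_evol B).aestronglyMeasurable) ?_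
      filter_upwards with t
      rw [norm_smul]
      calc ‖ψhat t‖ * ‖evol t B‖ ≤ ‖ψhat t‖ * 1 :=
            mul_le_mul_of_nonneg_left (evol_norm_le t hB) (norm_nonneg _)
        _ = ‖ψhat t‖ := mul_one _
    have hFA := hFint A hAsa
    have hFX := hFint (P*A*P) hXsa
    refine traceNorm_le_of_forall fun n e f he hf => ?_
    -- the functionals T ↦ ⟪P f_j, T (P e_j)⟫
    set L : Fin n → (H →L[ℂ] H) →L[ℂ] ℂ := fun j =>
      (innerSL ℂ (P (f j))).comp (ContinuousLinearMap.apply ℂ H (P (e j))) with hLdef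
    have hLapp : ∀ (j : Fin n) (M : H →L[ℂ] H), L j M = ⟪P (f j), M (P (e j))⟫_ℂ := by
      intro j M
      simp [hLdef]
    set χ : Fin n → ℝ → ℂ := fun j t => L j (evol t A - evol t (P*A*P)) with hχdef
    have hadjP : ContinuousLinearMap.adjoint P = P := by
      rw [← ContinuousLinearMap.star_eq_adjoint, hPsa.star_eq]
    -- Step 1: matrix elements as integrals
    have hNeq : ∀ j : Fin n,
        ‖(inner ℂ ((P * (opFun A ψhat - opFun (P*A*P) ψhat) * P) (e j)) (f j) : ℂ)‖
          = c * ‖∫ t : ℝ, ψhat t * χ j t‖ := by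
      intro j
      rw [norm_inner_symm]
      have happ : (P * (opFun A ψhat - opFun (P*A*P) ψhat) * P) (e j)
          = P ((opFun A ψhat - opFun (P*A*P) ψhat) (P (e j))) := rfl
      rw [happ]
      rw [inner_sa_move hPsa (f j) ((opFun A ψhat - opFun (P*A*P) ψhat) (P (e j)))]
      rw [show ⟪P (f j), (opFun A ψhat - opFun (P*A*P) ψhat) (P (e j))⟫_ℂ
          = L j (opFun A ψhat - opFun (P*A*P) ψhat) from (hLapp j _).symm]
      have hop : opFun A ψhat - opFun (P*A*P) ψhat
          = c • ∫ t : ℝ, (ψhat t • evol t A - ψhat t • evol t (P*A*P)) := by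
        rw [opFun, opFun, ← smul_sub, integral_sub hFA hFX, ← hc]
      have hsub : Integrable (fun t : ℝ => ψhat t • evol t A - ψhat t • evol t (P*A*P))
          volume := hFA.sub hFX
      rw [hop, ContinuousLinearMap.map_smul_of_tower,
        ← ContinuousLinearMap.integral_comp_comm (L j) hsub,
        norm_smul, Real.norm_eq_abs, abs_of_nonneg hc0]
      congr 2
      have hfe : (fun x : ℝ => (L j) (ψhat x • evol x A - ψhat x • evol x (P*A*P)))
          = fun t : ℝ => ψhat t * χ j t := by
        funext t
        rw [map_sub, _root_.map_smul, _root_.map_smul, smul_eq_mul, smul_eq_mul, ← mul_sub,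
          ← map_sub]
      rw [hfe]
    -- Step 2: pointwise bound on sums of χ
    have hχb : ∀ t : ℝ, ∑ j, ‖χ j t‖ ≤ |t| * Sr := by
      intro t
      have hcontΞ : Continuous (fun s : ℝ =>
          NormedSpace.exp ((t - s) • (Complex.I • A)) *
            ((Complex.I • (A - P*A*P)) *
              NormedSpace.exp (s • (Complex.I • (P*A*P))))) :=
        ((continuous_exp_real_smul _).comp (continuous_const.sub continuous_id)).mul
          (continuous_const.mul (continuous_exp_real_smul _))
      have hIi : IntervalIntegrable (fun s : ℝ =>
          NormedSpace.exp ((t - s) • (Complex.I • A)) *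
            ((Complex.I • (A - P*A*P)) *
              NormedSpace.exp (s • (Complex.I • (P*A*P))))) volume 0 t :=
        hcontΞ.intervalIntegrable 0 t
      have hχeq : ∀ j, χ j t = ∫ s in (0:ℝ)..t,
          L j (NormedSpace.exp ((t - s) • (Complex.I • A)) *
            ((Complex.I • (A - P*A*P)) *
              NormedSpace.exp (s • (Complex.I • (P*A*P))))) := by
        intro j
        show L j (evol t A - evol t (P*A*P)) = _
        rw [duhamel A (P*A*P) t]
        exact ((L j).intervalIntegral_comp_comm hIi).symm
      have hkey : ∀ s : ℝ, ∑ j,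
          ‖L j (NormedSpace.exp ((t - s) • (Complex.I • A)) *
            ((Complex.I • (A - P*A*P)) *
              NormedSpace.exp (s • (Complex.I • (P*A*P)))))‖ ≤ Sr := by
        intro s
        have hterm : ∀ j, ‖L j (NormedSpace.exp ((t - s) • (Complex.I • A)) *
            ((Complex.I • (A - P*A*P)) *
              NormedSpace.exp (s • (Complex.I • (P*A*P)))))‖
            = ‖⟪(P * A * (1 - P)) (evol (-(t-s)) A (P (f j))),
                evol s (P*A*P) (e j)⟫_ℂ‖ := by
          intro j
          rw [hLapp]
          have h3 : (NormedSpace.exp ((t - s) • (Complex.I • A)) *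
              ((Complex.I • (A - P*A*P)) *
                NormedSpace.exp (s • (Complex.I • (P*A*P))))) * P
              = NormedSpace.exp ((t - s) • (Complex.I • A)) *
                ((Complex.I • ((1 - P)*A*P)) *
                  NormedSpace.exp (s • (Complex.I • (P*A*P)))) := by
            rw [mul_assoc, alg_key A P hPidem s]
          have h2 : (NormedSpace.exp ((t - s) • (Complex.I • A)) *
              ((Complex.I • (A - P*A*P)) *
                NormedSpace.exp (s • (Complex.I • (P*A*P))))) (P (e j))
              = (NormedSpace.exp ((t - s) • (Complex.I • A)) *
                ((Complex.I • ((1 - P)*A*P)) *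
                  NormedSpace.exp (s • (Complex.I • (P*A*P))))) (e j) := by
            calc (NormedSpace.exp ((t - s) • (Complex.I • A)) *
                ((Complex.I • (A - P*A*P)) *
                  NormedSpace.exp (s • (Complex.I • (P*A*P))))) (P (e j))
                = ((NormedSpace.exp ((t - s) • (Complex.I • A)) *
                  ((Complex.I • (A - P*A*P)) *
                    NormedSpace.exp (s • (Complex.I • (P*A*P))))) * P) (e j) := rfl
              _ = _ := by rw [h3]
          rw [h2]
          rw [ContinuousLinearMap.mul_apply, ContinuousLinearMap.mul_apply,
            ContinuousLinearMap.smul_apply, _root_.map_smul, inner_smul_right,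
            norm_mul, Complex.norm_I, one_mul]
          rw [← evol_eq (t - s) A, ← evol_eq s (P*A*P)]
          rw [← ContinuousLinearMap.adjoint_inner_left (evol (t-s) A),
            ← ContinuousLinearMap.star_eq_adjoint, star_evol (t-s) hAsa]
          rw [← ContinuousLinearMap.adjoint_inner_left ((1-P)*A*P),
            ← ContinuousLinearMap.star_eq_adjoint, star_B' hAsa hPsa]
        calc (∑ j, ‖L j (NormedSpace.exp ((t - s) • (Complex.I • A)) *
            ((Complex.I • (A - P*A*P)) *
              NormedSpace.exp (s • (Complex.I • (P*A*P)))))‖)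
            = ∑ j, ‖⟪(P * A * (1 - P)) (evol (-(t-s)) A (P (f j))),
                evol s (P*A*P) (e j)⟫_ℂ‖ :=
              Finset.sum_congr rfl (fun j _ => hterm j)
          _ ≤ Sr := key_sum A P hAsa hPidem hPsa hS he hf s (-(t-s))
      have hgint : ∀ j : Fin n, IntegrableOn (fun s =>
          ‖L j (NormedSpace.exp ((t - s) • (Complex.I • A)) *
            ((Complex.I • (A - P*A*P)) *
              NormedSpace.exp (s • (Complex.I • (P*A*P)))))‖) (Set.uIoc 0 t) volume :=
        fun j => (((L j).continuous.comp hcontΞ).norm.intervalIntegrable 0 t).def'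
      calc ∑ j, ‖χ j t‖
          ≤ ∑ j, ∫ s in Set.uIoc 0 t,
              ‖L j (NormedSpace.exp ((t - s) • (Complex.I • A)) *
                ((Complex.I • (A - P*A*P)) *
                  NormedSpace.exp (s • (Complex.I • (P*A*P)))))‖ := by
            refine Finset.sum_le_sum fun j _ => ?_
            rw [hχeq j]
            exact intervalIntegral.norm_integral_le_integral_norm_uIoc
        _ = ∫ s in Set.uIoc 0 t, ∑ j,
              ‖L j (NormedSpace.exp ((t - s) • (Complex.I • A)) *
                ((Complex.I • (A - P*A*P)) *
                  NormedSpace.exp (s • (Complex.I • (P*A*P)))))‖ :=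
            (integral_finset_sum _ (fun j _ => hgint j)).symm
        _ ≤ ∫ _ in Set.uIoc 0 t, Sr := by
            refine setIntegral_mono_on (integrable_finset_sum _ (fun j _ => hgint j))
              (Iff.mpr integrableOn_const_iff (Or.inr ?_)) measurableSet_uIoc (fun s _ => hkey s)
            rw [Set.uIoc, Real.volume_Ioc]
            exact ENNReal.ofReal_lt_top
        _ = |t| * Sr := by
            rw [setIntegral_const, smul_eq_mul]
            congr 1
            rw [Set.uIoc, Real.volume_real_Ioc_of_le min_le_max]
            rw [max_sub_min_eq_abs]
            simp [abs_sub_comm]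
    -- Step 3: assembly
    have hχcont : ∀ j, Continuous (χ j) := fun j =>
      (L j).continuous.comp (hcontA.sub hcontX)
    have hχle2 : ∀ (j : Fin n) (t : ℝ), ‖χ j t‖ ≤ 2 := by
      intro j t
      rw [show χ j t = ⟪P (f j), (evol t A - evol t (P*A*P)) (P (e j))⟫_ℂ from hLapp j _]
      have hf1 : ‖P (f j)‖ ≤ 1 := le_trans (proj_norm_le hPidem hPsa _) (le_of_eq (hf.1 j))
      have he1 : ‖P (e j)‖ ≤ 1 := le_trans (proj_norm_le hPidem hPsa _) (le_of_eq (he.1 j))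
      have hop2 : ‖evol t A - evol t (P*A*P)‖ ≤ 2 := by
        calc ‖evol t A - evol t (P*A*P)‖ ≤ ‖evol t A‖ + ‖evol t (P*A*P)‖ := norm_sub_le _ _
          _ ≤ 1 + 1 := add_le_add (evol_norm_le t hAsa) (evol_norm_le t hXsa)
          _ = 2 := by norm_num
      calc ‖⟪P (f j), (evol t A - evol t (P*A*P)) (P (e j))⟫_ℂ‖
          ≤ ‖P (f j)‖ * ‖(evol t A - evol t (P*A*P)) (P (e j))‖ := norm_inner_le_norm _ _
        _ ≤ 1 * (2 * 1) := by
            refine mul_le_mul hf1 ?_ (norm_nonneg _) (by norm_num)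
            calc ‖(evol t A - evol t (P*A*P)) (P (e j))‖
                ≤ ‖evol t A - evol t (P*A*P)‖ * ‖P (e j)‖ :=
                  ContinuousLinearMap.le_opNorm _ _
              _ ≤ 2 * 1 := mul_le_mul hop2 he1 (norm_nonneg _) (by norm_num)
        _ = 2 := by norm_num
    have hint2 : ∀ j : Fin n, Integrable (fun t : ℝ => ‖ψhat t‖ * ‖χ j t‖) := by
      intro j
      refine Integrable.mono' (hψ1.norm.mul_const 2)
        ((hψ1.aestronglyMeasurable.norm).mul ((hχcont j).aestronglyMeasurable.norm)) ?_
      filter_upwards with t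
      rw [Real.norm_eq_abs, abs_of_nonneg (by positivity)]
      exact mul_le_mul_of_nonneg_left (hχle2 j t) (norm_nonneg _)
    have hrhs_int : Integrable (fun t : ℝ => ‖ψhat t‖ * (|t| * Sr)) := by
      have hEq : (fun t : ℝ => ‖ψhat t‖ * (|t| * Sr)) = fun t => (|t| * ‖ψhat t‖) * Sr := by
        funext t; ring
      rw [hEq]
      exact hψ2.mul_const Sr
    have hreal : ∑ j, ‖(inner ℂ ((P * (opFun A ψhat - opFun (P*A*P) ψhat) * P) (e j))
        (f j) : ℂ)‖ ≤ c * (I0 * Sr) := by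
      calc ∑ j, ‖(inner ℂ ((P * (opFun A ψhat - opFun (P*A*P) ψhat) * P) (e j)) (f j) : ℂ)‖
          = ∑ j, c * ‖∫ t : ℝ, ψhat t * χ j t‖ :=
            Finset.sum_congr rfl fun j _ => hNeq j
        _ = c * ∑ j, ‖∫ t : ℝ, ψhat t * χ j t‖ := (Finset.mul_sum _ _ _).symm
        _ ≤ c * ∑ j, ∫ t : ℝ, ‖ψhat t‖ * ‖χ j t‖ := by
            refine mul_le_mul_of_nonneg_left (Finset.sum_le_sum fun j _ => ?_) hc0
            calc ‖∫ t : ℝ, ψhat t * χ j t‖ ≤ ∫ t : ℝ, ‖ψhat t * χ j t‖ :=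
                  norm_integral_le_integral_norm _
              _ = ∫ t : ℝ, ‖ψhat t‖ * ‖χ j t‖ := by
                  congr 1; funext t; rw [norm_mul]
        _ = c * ∫ t : ℝ, ∑ j, ‖ψhat t‖ * ‖χ j t‖ := by
            rw [integral_finset_sum _ (fun j _ => hint2 j)]
        _ ≤ c * ∫ t : ℝ, ‖ψhat t‖ * (|t| * Sr) := by
            refine mul_le_mul_of_nonneg_left
              (integral_mono (integrable_finset_sum _ fun j _ => hint2 j) hrhs_int
                fun t => ?_) hc0
            simp only [← Finset.mul_sum]
            exact mul_le_mul_of_nonneg_left (hχb t) (norm_nonneg _)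
        _ = c * (I0 * Sr) := by
            congr 1
            rw [show (fun t : ℝ => ‖ψhat t‖ * (|t| * Sr)) = fun t : ℝ => (|t| * ‖ψhat t‖) * Sr
              from by funext t; ring]
            rw [integral_mul_const, ← hI0]
    calc ∑ j, (‖(inner ℂ ((P * (opFun A ψhat - opFun (P*A*P) ψhat) * P) (e j)) (f j) : ℂ)‖₊ : ℝ≥0∞)
        = ENNReal.ofReal (∑ j, ‖(inner ℂ ((P * (opFun A ψhat - opFun (P*A*P) ψhat) * P) (e j))
            (f j) : ℂ)‖) := by
          rw [ENNReal.ofReal_sum_of_nonneg (fun j _ => norm_nonneg _)]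
          exact Finset.sum_congr rfl fun j _ => (ofReal_norm _).symm
      _ ≤ ENNReal.ofReal (c * (I0 * Sr)) := ENNReal.ofReal_le_ofReal hreal
      _ = ENNReal.ofReal (c * I0) * ENNReal.ofReal Sr := by
          rw [← ENNReal.ofReal_mul (mul_nonneg hc0 hI0nn), mul_assoc]
      _ = ENNReal.ofReal (c * I0) * traceNorm (P * A * (1 - P)) := by
          rw [hSrdef, ENNReal.ofReal_toReal hS]
end

section
/- Let A be a trace-class operator with ‖A‖ < R on a separable Hilbert space, and P an orthogonal projection with Q = I − P. Let g(z) = Σ_{m=1}^∞ ω_m z^m be analytic in the disk of radius R, and define g⁽²⁾(t) = Σ_{m=2}^∞ m(m−1)|ω_m| t^{m−2}. Then ‖g(PAP) − P g(A) P‖_{S₁} ≤ (g⁽²⁾(‖A‖)/2) · ‖PAQ‖_{S₂} · ‖QAP‖_{S₂}. -/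
open scoped ENNReal NNReal
set_option linter.unusedSectionVars false
set_option linter.unreachableTactic false
set_option linter.unusedTactic false

/-- The square of the Hilbert–Schmidt norm: the supremum over finite orthonormal families
of `∑ j ‖T e_j‖²`. -/
noncomputable def hsNormSq {H : Type*} [NormedAddCommGroup H] [InnerProductSpace ℂ H]
    (T : H →L[ℂ] H) : ℝ≥0∞ :=
  ⨆ (n : ℕ) (e : Fin n → H) (_ : Orthonormal ℂ e),
      ∑ j, (‖T (e j)‖₊ : ℝ≥0∞) ^ 2

section Work
variable {H : Type*} [NormedAddCommGroup H] [InnerProductSpace ℂ H] [CompleteSpace H]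
local notation "⟪" x ", " y "⟫" => (inner ℂ x y : ℂ)
lemma ofReal_norm_eq_coe_nnnorm {E : Type*} [SeminormedAddCommGroup E] (a : E) :
    ENNReal.ofReal ‖a‖ = (‖a‖₊ : ℝ≥0∞) := ofReal_norm a
lemma sum_le_traceNorm (T : H →L[ℂ] H) {n : ℕ} (e f : Fin n → H)
    (he : Orthonormal ℂ e) (hf : Orthonormal ℂ f) :
    ∑ j, (‖⟪T (e j), f j⟫‖₊ : ℝ≥0∞) ≤ traceNorm T := by
  exact le_iSup_of_le n (le_iSup_of_le e (le_iSup_of_le f (le_iSup_of_le he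
    (le_iSup_of_le hf le_rfl))))

lemma traceNorm_le_of {T : H →L[ℂ] H} {C : ℝ≥0∞}
    (h : ∀ (n : ℕ) (e f : Fin n → H), Orthonormal ℂ e → Orthonormal ℂ f →
      ∑ j, (‖⟪T (e j), f j⟫‖₊ : ℝ≥0∞) ≤ C) : traceNorm T ≤ C := by
  refine iSup_le fun n => iSup_le fun e => iSup_le fun f => iSup_le fun he => iSup_le fun hf => ?_
  exact h n e f he hf

lemma sum_le_hsNormSq (T : H →L[ℂ] H) {n : ℕ} (e : Fin n → H) (he : Orthonormal ℂ e) :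
    ∑ j, (‖T (e j)‖₊ : ℝ≥0∞) ^ 2 ≤ hsNormSq T := by
  exact le_iSup_of_le n (le_iSup_of_le e (le_iSup_of_le he le_rfl))

lemma hsNormSq_le_of {T : H →L[ℂ] H} {C : ℝ≥0∞}
    (h : ∀ (n : ℕ) (e : Fin n → H), Orthonormal ℂ e →
      ∑ j, (‖T (e j)‖₊ : ℝ≥0∞) ^ 2 ≤ C) : hsNormSq T ≤ C := by
  refine iSup_le fun n => iSup_le fun e => iSup_le fun he => ?_
  exact h n e he


lemma coe_nnnorm_sq_eq {E : Type*} [SeminormedAddCommGroup E] (y : E) :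
    (‖y‖₊ ^ 2 : ℝ≥0∞) = ENNReal.ofReal (‖y‖ ^ 2) := by
  rw [ENNReal.ofReal_pow (norm_nonneg _), ofReal_norm_eq_coe_nnnorm]

open ContinuousLinearMap in
lemma hsNormSq_le_adjoint (T : H →L[ℂ] H) : hsNormSq T ≤ hsNormSq (adjoint T) := by
  obtain ⟨s, b, -⟩ := exists_hilbertBasis ℂ H
  refine hsNormSq_le_of fun n e he => ?_
  have parseval : ∀ x : H, (‖x‖₊ ^ 2 : ℝ≥0∞) = ∑' i : s, (‖⟪x, b i⟫‖₊ ^ 2 : ℝ≥0∞) := by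
    intro x
    have h1 : HasSum (fun i : s => (‖⟪x, b i⟫‖ : ℂ) ^ 2) ((‖x‖ : ℂ) ^ 2) := by
      have := b.hasSum_inner_mul_inner x x
      have heq : (fun i : s => ⟪x, b i⟫ * ⟪b i, x⟫) = fun i : s => (‖⟪x, b i⟫‖ : ℂ) ^ 2 := by
        funext i
        rw [← inner_conj_symm x (b i), RCLike.conj_mul, RCLike.norm_conj]
        norm_cast
      rw [heq] at this
      rwa [inner_self_eq_norm_sq_to_K] at this
    have h2 : HasSum (fun i : s => ‖⟪x, b i⟫‖ ^ 2) (‖x‖ ^ 2) := by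
      have := h1.mapL Complex.reCLM
      simpa [← Complex.ofReal_pow] using this
    rw [coe_nnnorm_sq_eq, ← h2.tsum_eq,
      ENNReal.ofReal_tsum_of_nonneg (fun i => sq_nonneg _) h2.summable]
    exact tsum_congr fun i => (coe_nnnorm_sq_eq _).symm
  calc ∑ j, (‖T (e j)‖₊ : ℝ≥0∞) ^ 2
      = ∑ j, ∑' i : s, (‖⟪T (e j), b i⟫‖₊ ^ 2 : ℝ≥0∞) := by
        exact Finset.sum_congr rfl fun j _ => parseval _
    _ = ∑' i : s, ∑ j, (‖⟪T (e j), b i⟫‖₊ ^ 2 : ℝ≥0∞) :=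
        (Summable.tsum_finsetSum fun _ _ => ENNReal.summable).symm
    _ ≤ ∑' i : s, (‖(adjoint T) (b i)‖₊ ^ 2 : ℝ≥0∞) := by
        refine ENNReal.tsum_le_tsum fun i => ?_
        have hb : ∀ j, ⟪T (e j), b i⟫ = ⟪e j, (adjoint T) (b i)⟫ := fun j =>
          (adjoint_inner_right T (e j) (b i)).symm
        have bessel : ∑ j, ‖⟪e j, (adjoint T) (b i)⟫‖ ^ 2 ≤ ‖(adjoint T) (b i)‖ ^ 2 :=
          Orthonormal.sum_inner_products_le _ he
        calc ∑ j, (‖⟪T (e j), b i⟫‖₊ ^ 2 : ℝ≥0∞)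
            = ENNReal.ofReal (∑ j, ‖⟪e j, (adjoint T) (b i)⟫‖ ^ 2) := by
              rw [ENNReal.ofReal_sum_of_nonneg (fun j _ => sq_nonneg _)]
              exact Finset.sum_congr rfl fun j _ => by rw [hb j, coe_nnnorm_sq_eq]
          _ ≤ ENNReal.ofReal (‖(adjoint T) (b i)‖ ^ 2) := ENNReal.ofReal_le_ofReal bessel
          _ = (‖(adjoint T) (b i)‖₊ ^ 2 : ℝ≥0∞) := (coe_nnnorm_sq_eq _).symm
    _ ≤ hsNormSq (adjoint T) := by
        rw [ENNReal.tsum_eq_iSup_sum]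
        refine iSup_le fun t => ?_
        have horth : Orthonormal ℂ (fun j : Fin t.card => b ((t.equivFin.symm j : ↑t) : ↑s)) := by
          refine b.orthonormal.comp _ ?_
          intro x y hxy
          exact t.equivFin.symm.injective (Subtype.val_injective hxy)
        have := sum_le_hsNormSq (adjoint T) _ horth
        refine le_trans (le_of_eq ?_) this
        rw [← Finset.sum_attach t (fun i => (‖(adjoint T) (b i)‖₊ ^ 2 : ℝ≥0∞))]
        exact Fintype.sum_equiv t.equivFin _ _ (fun x => by simp)

lemma hsNormSq_adjoint (T : H →L[ℂ] H) :
    hsNormSq (ContinuousLinearMap.adjoint T) = hsNormSq T := by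
  refine le_antisymm ?_ (hsNormSq_le_adjoint T)
  have := hsNormSq_le_adjoint (ContinuousLinearMap.adjoint T)
  rwa [ContinuousLinearMap.adjoint_adjoint] at this

lemma hsNormSq_mul_left (B T : H →L[ℂ] H) :
    hsNormSq (B * T) ≤ (‖B‖₊ : ℝ≥0∞) ^ 2 * hsNormSq T := by
  refine hsNormSq_le_of fun n e he => ?_
  calc ∑ j, (‖(B * T) (e j)‖₊ : ℝ≥0∞) ^ 2
      ≤ ∑ j, (‖B‖₊ : ℝ≥0∞) ^ 2 * (‖T (e j)‖₊ : ℝ≥0∞) ^ 2 := by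
        refine Finset.sum_le_sum fun j _ => ?_
        have h : ‖(B * T) (e j)‖₊ ≤ ‖B‖₊ * ‖T (e j)‖₊ := by
          simpa using B.le_opNNNorm (T (e j))
        calc (‖(B * T) (e j)‖₊ : ℝ≥0∞) ^ 2 ≤ ((‖B‖₊ * ‖T (e j)‖₊ : ℝ≥0) : ℝ≥0∞) ^ 2 := by
              gcongr
              all_goals exact_mod_cast h
          _ = (‖B‖₊ : ℝ≥0∞) ^ 2 * (‖T (e j)‖₊ : ℝ≥0∞) ^ 2 := by
              rw [ENNReal.coe_mul]; ring
    _ = (‖B‖₊ : ℝ≥0∞) ^ 2 * ∑ j, (‖T (e j)‖₊ : ℝ≥0∞) ^ 2 := by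
        rw [Finset.mul_sum]
    _ ≤ (‖B‖₊ : ℝ≥0∞) ^ 2 * hsNormSq T := by
        gcongr
        exact sum_le_hsNormSq T e he

open ContinuousLinearMap in
lemma hsNormSq_mul_right (T C : H →L[ℂ] H) :
    hsNormSq (T * C) ≤ (‖C‖₊ : ℝ≥0∞) ^ 2 * hsNormSq T := by
  have h1 : hsNormSq (T * C) = hsNormSq (adjoint C * adjoint T) := by
    rw [← hsNormSq_adjoint (T * C)]
    congr 1
    rw [show T * C = T.comp C from rfl, adjoint_comp]
    rfl
  rw [h1]
  have := hsNormSq_mul_left (adjoint C) (adjoint T)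
  rw [hsNormSq_adjoint T] at this
  refine this.trans ?_
  gcongr
  simp [nnnorm, LinearIsometryEquiv.norm_map]

open ContinuousLinearMap in
lemma traceNorm_mul_le (X Y : H →L[ℂ] H) :
    traceNorm (X * Y) ≤ hsNormSq X ^ ((1:ℝ)/2) * hsNormSq Y ^ ((1:ℝ)/2) := by
  refine traceNorm_le_of fun n e f he hf => ?_
  have key : ∀ j, ‖⟪(X * Y) (e j), f j⟫‖ ≤ ‖Y (e j)‖ * ‖(adjoint X) (f j)‖ := by
    intro j
    rw [show (X * Y) (e j) = X (Y (e j)) from rfl, ← adjoint_inner_right]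
    exact norm_inner_le_norm _ _
  set a : Fin n → ℝ := fun j => ‖Y (e j)‖
  set b : Fin n → ℝ := fun j => ‖(adjoint X) (f j)‖
  have cs : ∑ j, a j * b j ≤ Real.sqrt (∑ j, a j ^ 2) * Real.sqrt (∑ j, b j ^ 2) := by
    have h2 := Finset.sum_mul_sq_le_sq_mul_sq Finset.univ a b
    have h3 : (0:ℝ) ≤ ∑ j, a j * b j :=
      Finset.sum_nonneg fun j _ => mul_nonneg (norm_nonneg _) (norm_nonneg _)
    calc ∑ j, a j * b j = Real.sqrt ((∑ j, a j * b j) ^ 2) := (Real.sqrt_sq h3).symm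
      _ ≤ Real.sqrt ((∑ j, a j ^ 2) * ∑ j, b j ^ 2) := Real.sqrt_le_sqrt h2
      _ = Real.sqrt (∑ j, a j ^ 2) * Real.sqrt (∑ j, b j ^ 2) := Real.sqrt_mul
          (Finset.sum_nonneg fun j _ => sq_nonneg _) _
  calc ∑ j, (‖⟪(X * Y) (e j), f j⟫‖₊ : ℝ≥0∞)
      = ENNReal.ofReal (∑ j, ‖⟪(X * Y) (e j), f j⟫‖) := by
        rw [ENNReal.ofReal_sum_of_nonneg (fun j _ => norm_nonneg _)]
        exact Finset.sum_congr rfl fun j _ => (ofReal_norm_eq_coe_nnnorm _).symm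
    _ ≤ ENNReal.ofReal (Real.sqrt (∑ j, a j ^ 2) * Real.sqrt (∑ j, b j ^ 2)) := by
        refine ENNReal.ofReal_le_ofReal (le_trans ?_ cs)
        exact Finset.sum_le_sum fun j _ => key j
    _ = ENNReal.ofReal (∑ j, a j ^ 2) ^ ((1:ℝ)/2) * ENNReal.ofReal (∑ j, b j ^ 2) ^ ((1:ℝ)/2) := by
        rw [ENNReal.ofReal_mul (Real.sqrt_nonneg _)]
        rw [ENNReal.ofReal_rpow_of_nonneg (Finset.sum_nonneg fun j _ => sq_nonneg _) (by norm_num),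
          ENNReal.ofReal_rpow_of_nonneg (Finset.sum_nonneg fun j _ => sq_nonneg _) (by norm_num)]
        rw [Real.sqrt_eq_rpow, Real.sqrt_eq_rpow]
    _ ≤ hsNormSq X ^ ((1:ℝ)/2) * hsNormSq Y ^ ((1:ℝ)/2) := by
        have hY : ENNReal.ofReal (∑ j, a j ^ 2) ≤ hsNormSq Y := by
          have : ENNReal.ofReal (∑ j, a j ^ 2) = ∑ j, (‖Y (e j)‖₊ : ℝ≥0∞) ^ 2 := by
            rw [ENNReal.ofReal_sum_of_nonneg (fun j _ => sq_nonneg _)]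
            exact Finset.sum_congr rfl fun j _ => (coe_nnnorm_sq_eq _).symm
          rw [this]
          exact sum_le_hsNormSq Y e he
        have hX : ENNReal.ofReal (∑ j, b j ^ 2) ≤ hsNormSq X := by
          have : ENNReal.ofReal (∑ j, b j ^ 2) = ∑ j, (‖(adjoint X) (f j)‖₊ : ℝ≥0∞) ^ 2 := by
            rw [ENNReal.ofReal_sum_of_nonneg (fun j _ => sq_nonneg _)]
            exact Finset.sum_congr rfl fun j _ => (coe_nnnorm_sq_eq _).symm
          rw [this, ← hsNormSq_adjoint X]
          exact sum_le_hsNormSq (adjoint X) f hf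
        rw [mul_comm (ENNReal.ofReal (∑ j, a j ^ 2) ^ ((1:ℝ)/2))]
        exact mul_le_mul' (ENNReal.rpow_le_rpow hX (by norm_num))
          (ENNReal.rpow_le_rpow hY (by norm_num))

lemma traceNorm_neg (T : H →L[ℂ] H) : traceNorm (-T) = traceNorm T := by
  unfold traceNorm
  congr 1; funext n; congr 1; funext e; congr 1; funext f; congr 1; funext he; congr 1; funext hf
  refine Finset.sum_congr rfl fun j _ => ?_
  simp [inner_neg_left]

lemma traceNorm_smul_le (c : ℂ) (T : H →L[ℂ] H) :
    traceNorm (c • T) ≤ (‖c‖₊ : ℝ≥0∞) * traceNorm T := by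
  refine traceNorm_le_of fun n e f he hf => ?_
  have : ∀ j : Fin n, (‖⟪(c • T) (e j), f j⟫‖₊ : ℝ≥0∞) = ‖c‖₊ * ‖⟪T (e j), f j⟫‖₊ := by
    intro j
    rw [ContinuousLinearMap.smul_apply, inner_smul_left]
    push_cast
    rw [nnnorm_mul]
    simp
  calc ∑ j, (‖⟪(c • T) (e j), f j⟫‖₊ : ℝ≥0∞)
      = (‖c‖₊ : ℝ≥0∞) * ∑ j, (‖⟪T (e j), f j⟫‖₊ : ℝ≥0∞) := by
        rw [Finset.mul_sum]
        exact Finset.sum_congr rfl fun j _ => this j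
    _ ≤ _ := by gcongr; exact sum_le_traceNorm T e f he hf

lemma traceNorm_sum_le {ι : Type*} (s : Finset ι) (X : ι → H →L[ℂ] H) :
    traceNorm (∑ i ∈ s, X i) ≤ ∑ i ∈ s, traceNorm (X i) := by
  refine traceNorm_le_of fun n e f he hf => ?_
  have h1 : ∀ j : Fin n, (‖⟪(∑ i ∈ s, X i) (e j), f j⟫‖₊ : ℝ≥0∞)
      ≤ ∑ i ∈ s, (‖⟪(X i) (e j), f j⟫‖₊ : ℝ≥0∞) := by
    intro j
    rw [ContinuousLinearMap.sum_apply, sum_inner]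
    calc (‖∑ i ∈ s, ⟪(X i) (e j), f j⟫‖₊ : ℝ≥0∞)
        ≤ ((∑ i ∈ s, ‖⟪(X i) (e j), f j⟫‖₊ : ℝ≥0) : ℝ≥0∞) := by
          exact_mod_cast nnnorm_sum_le s _
      _ = ∑ i ∈ s, (‖⟪(X i) (e j), f j⟫‖₊ : ℝ≥0∞) := by push_cast; rfl
    
  calc ∑ j, (‖⟪(∑ i ∈ s, X i) (e j), f j⟫‖₊ : ℝ≥0∞)
      ≤ ∑ j, ∑ i ∈ s, (‖⟪(X i) (e j), f j⟫‖₊ : ℝ≥0∞) := Finset.sum_le_sum fun j _ => h1 j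
    _ = ∑ i ∈ s, ∑ j, (‖⟪(X i) (e j), f j⟫‖₊ : ℝ≥0∞) := Finset.sum_comm
    _ ≤ ∑ i ∈ s, traceNorm (X i) := Finset.sum_le_sum fun i _ => sum_le_traceNorm _ e f he hf

lemma traceNorm_tsum_le (X : ℕ → H →L[ℂ] H) (h : Summable fun m => ‖X m‖) :
    traceNorm (∑' m, X m) ≤ ∑' m, traceNorm (X m) := by
  have hX : Summable X := h.of_norm
  refine traceNorm_le_of fun n e f he hf => ?_
  have happ : ∀ j : Fin n, (∑' m, X m) (e j) = ∑' m, X m (e j) := fun j =>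
    (ContinuousLinearMap.apply ℂ H (e j)).map_tsum hX
  have hsum_app : ∀ j : Fin n, Summable (fun m => X m (e j)) := fun j =>
    hX.map (ContinuousLinearMap.apply ℂ H (e j)) (ContinuousLinearMap.apply ℂ H (e j)).continuous
  have hnn : ∀ j : Fin n, Summable (fun m => ‖⟪f j, X m (e j)⟫‖₊) := by
    intro j
    rw [← NNReal.summable_coe]
    refine Summable.of_nonneg_of_le (fun m => norm_nonneg _) (fun m => ?_) h
    calc ‖⟪f j, X m (e j)⟫‖ ≤ ‖f j‖ * ‖X m (e j)‖ := norm_inner_le_norm _ _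
      _ ≤ 1 * (‖X m‖ * ‖e j‖) := by
          refine mul_le_mul (le_of_eq (hf.1 j)) ((X m).le_opNorm (e j)) (norm_nonneg _)
            zero_le_one
      _ = ‖X m‖ := by rw [he.1 j]; ring
  have key : ∀ j : Fin n, (‖⟪(∑' m, X m) (e j), f j⟫‖₊ : ℝ≥0∞)
      ≤ ∑' m, (‖⟪X m (e j), f j⟫‖₊ : ℝ≥0∞) := by
    intro j
    have h1 : ‖⟪(∑' m, X m) (e j), f j⟫‖₊ = ‖⟪f j, ∑' m, X m (e j)⟫‖₊ := by
      rw [happ j]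
      simp [nnnorm, norm_inner_symm]
    have h2 : ⟪f j, ∑' m, X m (e j)⟫ = ∑' m, ⟪f j, X m (e j)⟫ :=
      (innerSL ℂ (f j)).map_tsum (hsum_app j)
    rw [h1, h2]
    calc (‖∑' m, ⟪f j, X m (e j)⟫‖₊ : ℝ≥0∞)
        ≤ ((∑' m, ‖⟪f j, X m (e j)⟫‖₊ : ℝ≥0) : ℝ≥0∞) := by
          exact_mod_cast nnnorm_tsum_le (hnn j)
      _ = ∑' m, (‖⟪f j, X m (e j)⟫‖₊ : ℝ≥0∞) := ENNReal.coe_tsum (hnn j)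
      _ = ∑' m, (‖⟪X m (e j), f j⟫‖₊ : ℝ≥0∞) := by
          refine tsum_congr fun m => ?_
          congr 1
          simp [nnnorm, norm_inner_symm]
  calc ∑ j, (‖⟪(∑' m, X m) (e j), f j⟫‖₊ : ℝ≥0∞)
      ≤ ∑ j, ∑' m, (‖⟪X m (e j), f j⟫‖₊ : ℝ≥0∞) := Finset.sum_le_sum fun j _ => key j
    _ = ∑' m, ∑ j, (‖⟪X m (e j), f j⟫‖₊ : ℝ≥0∞) := (Summable.tsum_finsetSum fun _ _ => ENNReal.summable).symm
    _ ≤ ∑' m, traceNorm (X m) := ENNReal.tsum_le_tsum fun m => sum_le_traceNorm _ e f he hf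
section Alg
variable {Rg : Type*} [Ring Rg] (P A : Rg)

lemma alg_Id1 (j : ℕ) :
    P * A ^ j = (P*A)^j * P + ∑ i ∈ Finset.range j, (P*A)^i * (P*A*(1-P)) * A^(j-1-i) := by
  induction j with
  | zero => simp
  | succ j ih =>
    have hL : P * A ^ (j+1) = (P * A ^ j) * A := by rw [pow_succ, ← mul_assoc]
    rw [hL, ih, add_mul, Finset.sum_mul, Finset.sum_range_succ]
    have h1 : (P*A)^j * P * A = (P*A)^(j+1) * P + (P*A)^j * (P*A*(1-P)) := by
      rw [pow_succ]
      rw [mul_assoc ((P*A)^j) (P*A) P, ← mul_add, mul_assoc ((P*A)^j) P A]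
      congr 1
      noncomm_ring
    have h2 : ∀ i ∈ Finset.range j,
        (P*A)^i * (P*A*(1-P)) * A^(j-1-i) * A = (P*A)^i * (P*A*(1-P)) * A^(j+1-1-i) := by
      intro i hi
      rw [Finset.mem_range] at hi
      rw [mul_assoc, ← pow_succ]
      congr 2
      omega
    rw [Finset.sum_congr rfl h2, h1]
    rw [show j + 1 - 1 - j = 0 from by omega, pow_zero, mul_one]
    abel

lemma alg_pow_P (hP : P * P = P) (m : ℕ) : (P*A*P)^(m+1) * P = (P*A*P)^(m+1) := by
  rw [pow_succ, mul_assoc, mul_assoc (P*A) P P, hP, ← mul_assoc]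

lemma alg_main (hP : P * P = P) (m : ℕ) :
    P * A^(m+1) * P = (P*A*P)^(m+1) + ∑ k ∈ Finset.range m, ∑ i ∈ Finset.range (k+1),
      ((P*A)^i * (P*A*(1-P)) * A^(k-i)) * (((1-P)*(A*P)) * (A*P)^(m-1-k)) := by
  induction m with
  | zero => simp
  | succ m ih =>
    have hL : P * A^(m+2) * P = (P * A^(m+1)) * (A * P) := by
      rw [pow_succ, ← mul_assoc, ← mul_assoc, mul_assoc (P * A^(m+1)) A P]
    have hsplit : (P * A^(m+1)) * (A * P)
        = (P * A^(m+1) * P) * (A * P) + (P * A^(m+1)) * ((1-P) * (A * P)) := by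
      noncomm_ring
    rw [hL, hsplit, ih, add_mul]
    have hA : (P*A*P)^(m+1) * (A*P) = (P*A*P)^(m+2) := by
      conv_lhs => rw [← alg_pow_P P A hP m]
      rw [mul_assoc ((P*A*P)^(m+1)) P (A*P), ← mul_assoc P A P, ← pow_succ]
    have hS : (∑ k ∈ Finset.range m, ∑ i ∈ Finset.range (k+1),
          ((P*A)^i * (P*A*(1-P)) * A^(k-i)) * (((1-P)*(A*P)) * (A*P)^(m-1-k))) * (A*P)
        = ∑ k ∈ Finset.range m, ∑ i ∈ Finset.range (k+1),
          ((P*A)^i * (P*A*(1-P)) * A^(k-i)) * (((1-P)*(A*P)) * (A*P)^(m+1-1-k)) := by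
      rw [Finset.sum_mul]
      refine Finset.sum_congr rfl fun k hk => ?_
      rw [Finset.mem_range] at hk
      rw [Finset.sum_mul]
      refine Finset.sum_congr rfl fun i _ => ?_
      rw [mul_assoc, mul_assoc (((1-P)*(A*P))), ← pow_succ,
        show m - 1 - k + 1 = m + 1 - 1 - k from by omega]
    have hT : (P * A^(m+1)) * ((1-P) * (A*P))
        = ∑ i ∈ Finset.range (m+1),
            ((P*A)^i * (P*A*(1-P)) * A^(m-i)) * (((1-P)*(A*P)) * (A*P)^(m+1-1-m)) := by
      rw [alg_Id1 P A (m+1), add_mul]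
      have hz : ((P*A)^(m+1) * P) * ((1-P) * (A*P)) = 0 := by
        rw [mul_assoc ((P*A)^(m+1)) P ((1-P)*(A*P)), ← mul_assoc P (1-P) (A*P)]
        have : P * (1-P) = 0 := by rw [mul_sub, mul_one, hP, sub_self]
        rw [this, zero_mul, mul_zero]
      rw [hz, zero_add, Finset.sum_mul]
      refine Finset.sum_congr rfl fun i hi => ?_
      rw [show m + 1 - 1 - m = 0 from by omega, pow_zero, mul_one,
        show m + 1 - 1 - i = m - i from by omega]
    rw [hA, hS, hT]
    conv_rhs => rw [Finset.sum_range_succ]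
    rw [Finset.sum_range_succ
      (fun i => (P*A)^i * (P*A*(1-P)) * A^(m-i) * ((1-P)*(A*P) * (A*P)^(m+1-1-m))) m,
      add_assoc, show m + 2 = m + 1 + 1 from rfl]
end Alg

lemma sq_rpow_half (x : ℝ≥0∞) : (x ^ 2) ^ ((1:ℝ)/2) = x := by
  rw [← ENNReal.rpow_natCast x 2, ← ENNReal.rpow_mul]
  norm_num

lemma proj_norm_le_one {P : H →L[ℂ] H} (hPidem : IsIdempotentElem P)
    (hPsa : IsSelfAdjoint P) : ‖P‖ ≤ 1 := by
  refine ContinuousLinearMap.opNorm_le_bound P zero_le_one fun x => ?_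
  rw [one_mul]
  by_cases h0 : ‖P x‖ = 0
  · rw [h0]; exact norm_nonneg x
  · have hPPx : P (P x) = P x := by
      calc P (P x) = (P * P) x := rfl
        _ = P x := by rw [hPidem.eq]
    have h1 : ⟪P x, P x⟫ = ⟪x, P x⟫ := by
      have hadj : ContinuousLinearMap.adjoint P = P := hPsa
      rw [← ContinuousLinearMap.adjoint_inner_right P x (P x), hadj, hPPx]
    have h2 : (‖P x‖ : ℝ) ^ 2 = RCLike.re ⟪P x, P x⟫ := (inner_self_eq_norm_sq _).symm
    have h3 : RCLike.re ⟪x, P x⟫ ≤ ‖x‖ * ‖P x‖ :=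
      le_trans (RCLike.re_le_norm _) (norm_inner_le_norm x (P x))
    have h4 : ‖P x‖ ^ 2 ≤ ‖x‖ * ‖P x‖ := by rw [h2, h1]; exact h3
    have h5 : 0 < ‖P x‖ := lt_of_le_of_ne (norm_nonneg _) (Ne.symm h0)
    nlinarith

lemma pow_opNorm_le {X : H →L[ℂ] H} {c : ℝ} (hc : 0 ≤ c) (h : ‖X‖ ≤ c) (i : ℕ) :
    ‖X ^ i‖ ≤ c ^ i := by
  induction i with
  | zero => rw [pow_zero, pow_zero]; exact ContinuousLinearMap.norm_id_le
  | succ i ih =>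
    rw [pow_succ, pow_succ]
    calc ‖X ^ i * X‖ ≤ ‖X ^ i‖ * ‖X‖ := norm_mul_le _ _
      _ ≤ c ^ i * c := mul_le_mul ih h (norm_nonneg _) (pow_nonneg hc i)

lemma traceNorm_term_le (A P : H →L[ℂ] H) (hPidem : IsIdempotentElem P)
    (hPsa : IsSelfAdjoint P) (i d j : ℕ) :
    traceNorm (((P*A)^i * (P*A*(1-P)) * A^d) * (((1-P)*(A*P)) * (A*P)^j))
      ≤ ENNReal.ofReal (‖A‖^(i+d+j)) *
        (hsNormSq (P*A*(1-P)) ^ ((1:ℝ)/2) * hsNormSq ((1-P)*A*P) ^ ((1:ℝ)/2)) := by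
  have hP1 : ‖P‖ ≤ 1 := proj_norm_le_one hPidem hPsa
  have hPA : ‖P * A‖ ≤ ‖A‖ := by
    calc ‖P * A‖ ≤ ‖P‖ * ‖A‖ := norm_mul_le _ _
      _ ≤ 1 * ‖A‖ := by gcongr
      _ = ‖A‖ := one_mul _
  have hAP : ‖A * P‖ ≤ ‖A‖ := by
    calc ‖A * P‖ ≤ ‖A‖ * ‖P‖ := norm_mul_le _ _
      _ ≤ ‖A‖ * 1 := by gcongr
      _ = ‖A‖ := mul_one _
  have hb1 : ‖(P*A)^i‖ ≤ ‖A‖^i := pow_opNorm_le (norm_nonneg A) hPA i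
  have hb2 : ‖A^d‖ ≤ ‖A‖^d := pow_opNorm_le (norm_nonneg A) le_rfl d
  have hb3 : ‖(A*P)^j‖ ≤ ‖A‖^j := pow_opNorm_le (norm_nonneg A) hAP j
  set hs1 := hsNormSq (P*A*(1-P))
  set hs2 := hsNormSq ((1-P)*A*P)
  have hX : hsNormSq ((P*A)^i * (P*A*(1-P)) * A^d)
      ≤ (‖A^d‖₊ : ℝ≥0∞)^2 * ((‖(P*A)^i‖₊ : ℝ≥0∞)^2 * hs1) := by
    refine le_trans (hsNormSq_mul_right _ (A^d)) ?_
    gcongr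
    exact hsNormSq_mul_left _ _
  have hY : hsNormSq (((1-P)*(A*P)) * (A*P)^j) ≤ (‖(A*P)^j‖₊ : ℝ≥0∞)^2 * hs2 := by
    refine le_trans (hsNormSq_mul_right _ ((A*P)^j)) ?_
    gcongr
    rw [← mul_assoc]
  calc traceNorm (((P*A)^i * (P*A*(1-P)) * A^d) * (((1-P)*(A*P)) * (A*P)^j))
      ≤ hsNormSq ((P*A)^i * (P*A*(1-P)) * A^d) ^ ((1:ℝ)/2)
        * hsNormSq (((1-P)*(A*P)) * (A*P)^j) ^ ((1:ℝ)/2) := traceNorm_mul_le _ _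
    _ ≤ ((‖A^d‖₊ : ℝ≥0∞)^2 * ((‖(P*A)^i‖₊ : ℝ≥0∞)^2 * hs1)) ^ ((1:ℝ)/2)
        * ((‖(A*P)^j‖₊ : ℝ≥0∞)^2 * hs2) ^ ((1:ℝ)/2) := by
        gcongr (?_) ^ _ * (?_) ^ _ <;> first | exact hX | exact hY
    _ = ((‖A^d‖₊ : ℝ≥0∞) * (‖(P*A)^i‖₊ : ℝ≥0∞) * (‖(A*P)^j‖₊ : ℝ≥0∞))
        * (hs1 ^ ((1:ℝ)/2) * hs2 ^ ((1:ℝ)/2)) := by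
        rw [ENNReal.mul_rpow_of_nonneg _ _ (by norm_num : (0:ℝ) ≤ 1/2),
          ENNReal.mul_rpow_of_nonneg _ _ (by norm_num : (0:ℝ) ≤ 1/2),
          ENNReal.mul_rpow_of_nonneg _ _ (by norm_num : (0:ℝ) ≤ 1/2),
          sq_rpow_half, sq_rpow_half, sq_rpow_half]
        ring
    _ ≤ ENNReal.ofReal (‖A‖^(i+d+j)) * (hs1 ^ ((1:ℝ)/2) * hs2 ^ ((1:ℝ)/2)) := by
        gcongr
        have : (‖A‖ : ℝ)^(i+d+j) = ‖A‖^d * ‖A‖^i * ‖A‖^j := by rw [← pow_add, ← pow_add]; ring_nf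
        rw [this, ENNReal.ofReal_mul (by positivity), ENNReal.ofReal_mul (by positivity)]
        have cv : ∀ (T : H →L[ℂ] H), (‖T‖₊ : ℝ≥0∞) = ENNReal.ofReal ‖T‖ := fun T =>
          (ofReal_norm_eq_coe_nnnorm T).symm
        rw [cv, cv, cv]
        exact mul_le_mul' (mul_le_mul' (ENNReal.ofReal_le_ofReal hb2)
          (ENNReal.ofReal_le_ofReal hb1)) (ENNReal.ofReal_le_ofReal hb3)

lemma gauss_sum (m : ℕ) : 2 * (∑ k ∈ Finset.range m, (k+1)) = m * (m+1) := by
  induction m with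
  | zero => simp
  | succ m ih => rw [Finset.sum_range_succ, Nat.mul_add, ih]; ring

lemma Dbound (A P : H →L[ℂ] H) (hPidem : IsIdempotentElem P)
    (hPsa : IsSelfAdjoint P) (m : ℕ) :
    traceNorm (P * A^(m+1) * P - (P*A*P)^(m+1))
      ≤ ENNReal.ofReal ((m:ℝ) * ((m:ℝ)+1) / 2 * ‖A‖ ^ (m-1)) *
        (hsNormSq (P*A*(1-P)) ^ ((1:ℝ)/2) * hsNormSq ((1-P)*A*P) ^ ((1:ℝ)/2)) := by
  set K := hsNormSq (P*A*(1-P)) ^ ((1:ℝ)/2) * hsNormSq ((1-P)*A*P) ^ ((1:ℝ)/2) with hK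
  set E := ENNReal.ofReal (‖A‖ ^ (m-1)) * K with hE
  have hdiff : P * A^(m+1) * P - (P*A*P)^(m+1)
      = ∑ k ∈ Finset.range m, ∑ i ∈ Finset.range (k+1),
          ((P*A)^i * (P*A*(1-P)) * A^(k-i)) * (((1-P)*(A*P)) * (A*P)^(m-1-k)) := by
    rw [alg_main P A hPidem.eq m, add_sub_cancel_left]
  rw [hdiff]
  have step1 : traceNorm (∑ k ∈ Finset.range m, ∑ i ∈ Finset.range (k+1),
      ((P*A)^i * (P*A*(1-P)) * A^(k-i)) * (((1-P)*(A*P)) * (A*P)^(m-1-k)))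
      ≤ ∑ k ∈ Finset.range m, ∑ i ∈ Finset.range (k+1), E := by
    refine le_trans (traceNorm_sum_le _ _) ?_
    refine Finset.sum_le_sum fun k hk => ?_
    refine le_trans (traceNorm_sum_le _ _) ?_
    refine Finset.sum_le_sum fun i hi => ?_
    rw [Finset.mem_range] at hk hi
    have := traceNorm_term_le A P hPidem hPsa i (k-i) (m-1-k)
    rw [show i + (k-i) + (m-1-k) = m - 1 from by omega] at this
    exact this
  refine le_trans step1 ?_
  have hcount : ∑ k ∈ Finset.range m, ∑ i ∈ Finset.range (k+1), E
      = ((∑ k ∈ Finset.range m, (k+1) : ℕ) : ℝ≥0∞) * E := by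
    rw [Nat.cast_sum, Finset.sum_mul]
    refine Finset.sum_congr rfl fun k _ => ?_
    rw [Finset.sum_const, Finset.card_range, nsmul_eq_mul]
  rw [hcount]
  have hN := gauss_sum m
  have hNr : ((∑ k ∈ Finset.range m, (k+1) : ℕ) : ℝ) = (m:ℝ) * ((m:ℝ)+1) / 2 := by
    have : (2:ℝ) * ((∑ k ∈ Finset.range m, (k+1) : ℕ) : ℝ) = (m:ℝ) * ((m:ℝ)+1) := by
      exact_mod_cast congrArg (Nat.cast : ℕ → ℝ) hN
    linarith
  rw [hE, ← mul_assoc]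
  gcongr
  rw [show ((∑ k ∈ Finset.range m, (k+1) : ℕ) : ℝ≥0∞)
      = ENNReal.ofReal ((∑ k ∈ Finset.range m, (k+1) : ℕ) : ℝ) from by
    rw [ENNReal.ofReal_natCast],
    ← ENNReal.ofReal_mul (by positivity), hNr]

lemma coeff_summable {ω : ℕ → ℂ} {R r : ℝ} (hr0 : 0 ≤ r) (hrR : r < R)
    (hconv : ∀ ρ : ℝ, 0 ≤ ρ → ρ < R → Summable (fun m => ‖ω m‖ * ρ ^ m)) :
    Summable (fun m : ℕ => ((m:ℝ)+2) * ((m:ℝ)+1) * ‖ω (m+2)‖ * r ^ m) := by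
  set ρ := (r + R)/2 with hρ
  have hρ0 : 0 < ρ := by rw [hρ]; linarith
  have hρr : r < ρ := by rw [hρ]; linarith
  have hρR : ρ < R := by rw [hρ]; linarith
  have hsum := hconv ρ (le_of_lt hρ0) hρR
  set C := ∑' m, ‖ω m‖ * ρ^m with hC
  have hle : ∀ m, ‖ω m‖ * ρ^m ≤ C := fun m =>
    Summable.le_tsum hsum m (fun k _ => by positivity)
  set t := r / ρ with ht
  have ht0 : 0 ≤ t := by positivity
  have ht1 : t < 1 := (div_lt_one hρ0).2 hρr
  have htnorm : ‖t‖ < 1 := by rwa [Real.norm_eq_abs, abs_of_nonneg ht0]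
  have hgeom : Summable (fun m : ℕ => ((m:ℝ)+2)*((m:ℝ)+1) * t^m) := by
    have h2 : Summable (fun m : ℕ => ((m:ℝ))^2 * t^m) := by
      simpa using summable_pow_mul_geometric_of_norm_lt_one 2 htnorm
    have h1 : Summable (fun m : ℕ => ((m:ℝ)) * t^m) := by
      simpa using summable_pow_mul_geometric_of_norm_lt_one 1 htnorm
    have h0 : Summable (fun m : ℕ => t^m) := summable_geometric_of_lt_one ht0 ht1
    refine Summable.congr ((h2.add (h1.mul_left 3)).add (h0.mul_left 2)) fun m => by ring
  refine Summable.of_nonneg_of_le (fun m => by positivity) (fun m => ?_)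
    (hgeom.mul_left (C / ρ^2))
  have hω : ‖ω (m+2)‖ ≤ C / ρ^(m+2) := by
    rw [le_div_iff₀ (by positivity)]
    exact hle (m+2)
  have hρne : ρ ≠ 0 := ne_of_gt hρ0
  clear_value C
  clear_value t
  clear_value ρ
  have key : ‖ω (m+2)‖ * r^m ≤ C / ρ^2 * t^m := by
    calc ‖ω (m+2)‖ * r^m ≤ (C / ρ^(m+2)) * r^m := by
          exact mul_le_mul_of_nonneg_right hω (by positivity)
      _ = C / ρ^2 * t^m := by
          rw [ht, div_pow]
          rw [show m + 2 = 2 + m from by omega, pow_add]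
          field_simp
  calc ((m:ℝ)+2) * ((m:ℝ)+1) * ‖ω (m+2)‖ * r^m
      = (((m:ℝ)+2) * ((m:ℝ)+1)) * (‖ω (m+2)‖ * r^m) := by ring
    _ ≤ (((m:ℝ)+2) * ((m:ℝ)+1)) * (C / ρ^2 * t^m) := by
        refine mul_le_mul_of_nonneg_left key (by positivity)
    _ = C / ρ^2 * (((m:ℝ)+2) * ((m:ℝ)+1) * t^m) := by ring
end Work

/-- `‖g(PAP) − P g(A) P‖₁ ≤ (g⁽²⁾(‖A‖)/2)‖PAQ‖₂‖QAP‖₂`. -/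
theorem stmt_7 {H : Type*} [NormedAddCommGroup H] [InnerProductSpace ℂ H]
    [CompleteSpace H] [TopologicalSpace.SeparableSpace H]
    (A P : H →L[ℂ] H) (hAtr : traceNorm A ≠ ⊤)
    (hPidem : IsIdempotentElem P) (hPsa : IsSelfAdjoint P)
    (ω : ℕ → ℂ) (hω0 : ω 0 = 0) (R : ℝ) (hR : ‖A‖ < R)
    (hconv : ∀ r : ℝ, 0 ≤ r → r < R → Summable (fun m => ‖ω m‖ * r ^ m)) :
    traceNorm ((∑' m : ℕ, ω m • (P * A * P) ^ m) - P * (∑' m : ℕ, ω m • A ^ m) * P)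
      ≤ ENNReal.ofReal ((∑' m : ℕ, ((m:ℝ)+2) * ((m:ℝ)+1) * ‖ω (m+2)‖ * ‖A‖ ^ m) / 2) *
          (hsNormSq (P * A * (1 - P))) ^ ((1:ℝ)/2) *
          (hsNormSq ((1 - P) * A * P)) ^ ((1:ℝ)/2) := by
  set r := ‖A‖ with hr
  have hr0 : 0 ≤ r := norm_nonneg A
  have hP1 : ‖P‖ ≤ 1 := proj_norm_le_one hPidem hPsa
  have hPAP : ‖P * A * P‖ ≤ r := by
    calc ‖P * A * P‖ ≤ ‖P * A‖ * ‖P‖ := norm_mul_le _ _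
      _ ≤ (‖P‖ * ‖A‖) * ‖P‖ := by gcongr; exact norm_mul_le _ _
      _ ≤ (1 * r) * 1 := by gcongr
      _ = r := by ring
  have hbound : ∀ (B : H →L[ℂ] H), ‖B‖ ≤ r → ∀ m, ‖ω m • B^m‖ ≤ ‖ω m‖ * r^m := by
    intro B hB m
    cases m with
    | zero => simp [hω0]
    | succ k =>
      rw [norm_smul]
      exact mul_le_mul_of_nonneg_left (pow_opNorm_le hr0 hB (k+1)) (norm_nonneg _)
  have hs1 : Summable (fun m => ‖ω m‖ * r^m) := hconv r hr0 hR
  have hsum_norm : ∀ (B : H →L[ℂ] H), ‖B‖ ≤ r → Summable (fun m => ‖ω m • B^m‖) := fun B hB =>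
    Summable.of_nonneg_of_le (fun m => norm_nonneg _) (hbound B hB) hs1
  have hsum_PAP : Summable (fun m => ω m • (P*A*P)^m) := (hsum_norm _ hPAP).of_norm
  have hsum_A : Summable (fun m => ω m • A^m) := (hsum_norm A le_rfl).of_norm
  set φ : (H →L[ℂ] H) →L[ℂ] (H →L[ℂ] H) :=
    (ContinuousLinearMap.mul ℂ (H →L[ℂ] H) P).comp
      ((ContinuousLinearMap.mul ℂ (H →L[ℂ] H)).flip P) with hφdef
  have hφ : ∀ X : H →L[ℂ] H, φ X = P * X * P := by
    intro X
    simp only [hφdef, ContinuousLinearMap.comp_apply, ContinuousLinearMap.flip_apply,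
      ContinuousLinearMap.mul_apply']
    rw [mul_assoc]
  have hmap : P * (∑' m, ω m • A^m) * P = ∑' m, ω m • (P * A^m * P) := by
    rw [← hφ, φ.map_tsum hsum_A]
    exact tsum_congr fun m => by rw [map_smul, hφ]
  have hsum_PAmP : Summable (fun m => ω m • (P * A^m * P)) := by
    refine Summable.congr (hsum_A.map φ φ.continuous) fun m => by
      show φ (ω m • A^m) = _
      rw [map_smul, hφ]
  have hdiff : (∑' m : ℕ, ω m • (P * A * P) ^ m) - P * (∑' m : ℕ, ω m • A ^ m) * P
      = ∑' m, (ω m • (P*A*P)^m - ω m • (P * A^m * P)) := by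
    rw [hmap, Summable.tsum_sub hsum_PAP hsum_PAmP]
  rw [hdiff]
  set K := hsNormSq (P * A * (1 - P)) ^ ((1:ℝ)/2) * hsNormSq ((1 - P) * A * P) ^ ((1:ℝ)/2)
    with hKdef
  have hPAmP : ∀ m, ‖ω m • (P * A^m * P)‖ ≤ ‖ω m‖ * r^m := by
    intro m
    rw [norm_smul]
    refine mul_le_mul_of_nonneg_left ?_ (norm_nonneg _)
    calc ‖P * A^m * P‖ ≤ ‖P * A^m‖ * ‖P‖ := norm_mul_le _ _
      _ ≤ (‖P‖ * ‖A^m‖) * ‖P‖ := by gcongr; exact norm_mul_le _ _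
      _ ≤ (1 * r^m) * 1 := by
          gcongr
          exact pow_opNorm_le hr0 le_rfl m
      _ = r^m := by ring
  have hZnorm : Summable (fun m => ‖ω m • (P*A*P)^m - ω m • (P * A^m * P)‖) := by
    refine Summable.of_nonneg_of_le (fun m => norm_nonneg _)
      (fun m => (norm_sub_le _ _).trans (add_le_add (hbound _ hPAP m) (hPAmP m)))
      ?_
    exact Summable.congr (hs1.add hs1) fun m => by ring
  refine le_trans (traceNorm_tsum_le _ hZnorm) ?_
  set creal : ℕ → ℝ := fun m => ((m-1 : ℕ):ℝ) * (m:ℝ) / 2 * r^(m-2) with hcreal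
  have hcnn : ∀ m, 0 ≤ creal m := fun m =>
    mul_nonneg (by positivity) (pow_nonneg hr0 _)
  have hterm : ∀ m, traceNorm (ω m • (P*A*P)^m - ω m • (P * A^m * P))
      ≤ ENNReal.ofReal (‖ω m‖ * creal m) * K := by
    intro m
    have hfac : ω m • (P*A*P)^m - ω m • (P * A^m * P)
        = (-(ω m)) • (P * A^m * P - (P*A*P)^m) := by
      rw [neg_smul, smul_sub, neg_sub]
    rw [hfac]
    refine le_trans (traceNorm_smul_le _ _) ?_
    cases m with
    | zero => simp [hω0]
    | succ k =>
      have hb := Dbound A P hPidem hPsa k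
      have hc : creal (k+1) = (k:ℝ) * ((k:ℝ)+1) / 2 * r^(k-1) := by
        simp only [hcreal, Nat.add_sub_cancel]
        push_cast
        ring_nf
      calc (‖-(ω (k+1))‖₊ : ℝ≥0∞) * traceNorm (P * A^(k+1) * P - (P*A*P)^(k+1))
          ≤ (‖ω (k+1)‖₊ : ℝ≥0∞) * (ENNReal.ofReal ((k:ℝ) * ((k:ℝ)+1) / 2 * r^(k-1)) * K) := by
            rw [nnnorm_neg]
            exact mul_le_mul' le_rfl hb
        _ = ENNReal.ofReal (‖ω (k+1)‖ * creal (k+1)) * K := by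
            rw [hc, ← mul_assoc, ← ofReal_norm_eq_coe_nnnorm,
              ← ENNReal.ofReal_mul (norm_nonneg _)]
  refine le_trans (ENNReal.tsum_le_tsum hterm) ?_
  rw [ENNReal.tsum_mul_right]
  have hg := coeff_summable hr0 hR hconv
  have h2 : Summable (fun m => ‖ω (m+2)‖ * creal (m+2)) := by
    refine Summable.congr (hg.div_const 2) fun m => ?_
    simp only [hcreal]
    push_cast
    ring_nf
  have hcsum : Summable (fun m => ‖ω m‖ * creal m) := (summable_nat_add_iff 2).mp h2
  have htsum_eq : ∑' m, ‖ω m‖ * creal m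
      = (∑' m : ℕ, ((m:ℝ)+2) * ((m:ℝ)+1) * ‖ω (m+2)‖ * r ^ m) / 2 := by
    rw [Summable.tsum_eq_zero_add hcsum, Summable.tsum_eq_zero_add ((summable_nat_add_iff 1).mpr hcsum)]
    have e0 : ‖ω 0‖ * creal 0 = 0 := by simp [hω0]
    have e1 : ‖ω 1‖ * creal 1 = 0 := by
      simp [hcreal]
    rw [e0, e1, zero_add, zero_add, ← tsum_div_const]
    refine tsum_congr fun m => ?_
    simp only [hcreal]
    push_cast
    ring_nf
  rw [show (fun m => ENNReal.ofReal (‖ω m‖ * creal m)) = fun m => ENNReal.ofReal (‖ω m‖ * creal m)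
      from rfl,
    ← ENNReal.ofReal_tsum_of_nonneg (fun m => mul_nonneg (norm_nonneg _) (hcnn m)) hcsum,
    htsum_eq, hKdef, ← mul_assoc]
end
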